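/- Let μ > 0 and Δ > 0 be real, let B and N be positive integers with B dividing N, and let v : Fin B → ℕ have entries v_i ≥ 1 with ∑_{i=1}^{B} v_i = N. Define F_i(t) = 0 for t < Δ and F_i(t) = 1 − e^{−v_i μ (t−Δ)} for t ≥ Δ, and F_bal(t) = 0 for t < Δ and F_bal(t) = 1 − e^{−(N/B) μ (t−Δ)} for t ≥ Δ. Then ∫_0^∞ (1 − ∏_{i=1}^{B} F_i(t)) dt ≥ ∫_0^∞ (1 − F_bal(t)^B) dt. (That is, with shifted-exponential SExp(Δ, μ) service times at workers, the balanced assignment of non-overlapping batches achieves the minimum average job compute time.) -/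

import Mathlib

open Finset MeasureTheory

lemma amgm_pow {B : ℕ} (hB : 0 < B) (a : Fin B → ℝ) (ha : ∀ i, 0 ≤ a i) :
    ∏ i, a i ≤ ((∑ i, a i) / B) ^ B := by
  have hBR : (0 : ℝ) < B := Nat.cast_pos.mpr hB
  have h := Real.geom_mean_le_arith_mean_weighted Finset.univ (fun _ => (B : ℝ)⁻¹) a
    (fun i _ => by positivity) (by simp [Finset.card_univ]; field_simp) (fun i _ => ha i)
  have hprod : (∏ i, a i ^ ((B : ℝ)⁻¹)) = (∏ i, a i) ^ ((B : ℝ)⁻¹) :=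
    Real.finset_prod_rpow _ _ (fun i _ => ha i) _
  have hsum : (∑ i, (B : ℝ)⁻¹ * a i) = (∑ i, a i) / B := by
    rw [← Finset.mul_sum]; ring
  rw [hprod, hsum] at h
  have hpn : (0 : ℝ) ≤ (∏ i, a i) ^ ((B : ℝ)⁻¹) :=
    Real.rpow_nonneg (Finset.prod_nonneg fun i _ => ha i) _
  have := pow_le_pow_left₀ hpn h B
  rwa [← Real.rpow_natCast ((∏ i, a i) ^ ((B : ℝ)⁻¹)) B,
    ← Real.rpow_mul (Finset.prod_nonneg fun i _ => ha i),
    inv_mul_cancel₀ (ne_of_gt hBR), Real.rpow_one] at this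

lemma jensen_exp {B : ℕ} (hB : 0 < B) (x : Fin B → ℝ) :
    Real.exp ((∑ i, x i) / B) ≤ (∑ i, Real.exp (x i)) / B := by
  have hBR : (0 : ℝ) < B := Nat.cast_pos.mpr hB
  have h := convexOn_exp.map_sum_le (t := Finset.univ) (w := fun _ : Fin B => (B : ℝ)⁻¹)
    (p := x) (fun i _ => by positivity) (by simp [Finset.card_univ]; field_simp)
    (fun i _ => Set.mem_univ _)
  simp only [smul_eq_mul] at h
  have h1 : (∑ i, (B : ℝ)⁻¹ * x i) = (∑ i, x i) / B := by rw [← Finset.mul_sum]; ring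
  have h2 : (∑ i, (B : ℝ)⁻¹ * Real.exp (x i)) = (∑ i, Real.exp (x i)) / B := by
    rw [← Finset.mul_sum]; ring
  rwa [h1, h2] at h

/-- With i.i.d. shifted-exponential SExp(Δ, μ) service times, the balanced assignment of
non-overlapping batches minimizes the average job compute time. Here `Fᵢ` is the CDF of the
compute time of a batch hosted by `v i` workers, and `F_bal` is that of a balanced batch. -/
theorem balanced_assignment_optimal_shifted_exponential
    (μ Δ : ℝ) (hμ : 0 < μ) (hΔ : 0 < Δ)
    (B N : ℕ) (hB : 0 < B) (hN : 0 < N) (hdvd : B ∣ N)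
    (v : Fin B → ℕ) (hv : ∀ i, 1 ≤ v i) (hsum : ∑ i, v i = N) :
    (∫ t in Set.Ioi (0 : ℝ),
        (1 - (if t < Δ then (0 : ℝ)
              else 1 - Real.exp (-((N : ℝ) / (B : ℝ)) * μ * (t - Δ))) ^ B)) ≤
      ∫ t in Set.Ioi (0 : ℝ),
        (1 - ∏ i, (if t < Δ then (0 : ℝ)
                   else 1 - Real.exp (-(v i : ℝ) * μ * (t - Δ)))) := by
  have hBR : (0 : ℝ) < B := Nat.cast_pos.mpr hB
  set f : ℝ → ℝ := fun t => 1 - (if t < Δ then (0 : ℝ)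
      else 1 - Real.exp (-((N : ℝ) / (B : ℝ)) * μ * (t - Δ))) ^ B with hf
  set g : ℝ → ℝ := fun t => 1 - ∏ i, (if t < Δ then (0 : ℝ)
      else 1 - Real.exp (-(v i : ℝ) * μ * (t - Δ))) with hg
  -- pointwise inequality f ≤ g
  have hfg : ∀ t : ℝ, f t ≤ g t := by
    intro t
    simp only [hf, hg]
    by_cases ht : t < Δ
    · simp [ht, zero_pow hB.ne', Finset.prod_const, hB.ne']
    · simp only [ht, if_false]
      have hc : 0 ≤ μ * (t - Δ) := mul_nonneg hμ.le (by linarith [not_lt.mp ht])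
      set a : Fin B → ℝ := fun i => 1 - Real.exp (-(v i : ℝ) * μ * (t - Δ)) with ha
      have ha0 : ∀ i, 0 ≤ a i := by
        intro i
        have h1 : -(v i : ℝ) * μ * (t - Δ) ≤ 0 := by
          nlinarith [mul_nonneg (Nat.cast_nonneg (v i) : (0:ℝ) ≤ (v i : ℝ)) hc]
        have h2 := Real.exp_le_one_iff.mpr h1
        simp only [ha]; linarith
      have key : ∏ i, a i ≤ (1 - Real.exp (-((N : ℝ) / (B : ℝ)) * μ * (t - Δ))) ^ B := by
        refine le_trans (amgm_pow hB a ha0) ?_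
        have hmean : Real.exp (-((N : ℝ) / (B : ℝ)) * μ * (t - Δ))
            ≤ (∑ i, Real.exp (-(v i : ℝ) * μ * (t - Δ))) / B := by
          have := jensen_exp hB (fun i => -(v i : ℝ) * μ * (t - Δ))
          have hs : (∑ i, -(v i : ℝ) * μ * (t - Δ)) / (B : ℝ)
              = -((N : ℝ) / (B : ℝ)) * μ * (t - Δ) := by
            have : (∑ i, -(v i : ℝ) * μ * (t - Δ)) = -(N : ℝ) * μ * (t - Δ) := by
              rw [← hsum]
              push_cast
              rw [← Finset.sum_mul, ← Finset.sum_mul, Finset.sum_neg_distrib]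
            rw [this]; ring
          rwa [hs] at this
        have hsa : (∑ i, a i) / B = 1 - (∑ i, Real.exp (-(v i : ℝ) * μ * (t - Δ))) / B := by
          simp only [ha, Finset.sum_sub_distrib, Finset.sum_const, Finset.card_univ,
            Fintype.card_fin, nsmul_eq_mul, mul_one]
          field_simp
          congr 1
          exact Finset.sum_congr rfl (fun x _ => by congr 1; ring)
        have h1 : (∑ i, a i) / B ≤ 1 - Real.exp (-((N : ℝ) / (B : ℝ)) * μ * (t - Δ)) := by
          rw [hsa]; linarith
        have h0 : 0 ≤ (∑ i, a i) / B :=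
          div_nonneg (Finset.sum_nonneg fun i _ => ha0 i) hBR.le
        exact pow_le_pow_left₀ h0 h1 B
      linarith
  -- nonnegativity of f
  have hf0 : ∀ t : ℝ, 0 ≤ f t := by
    intro t
    simp only [hf]
    by_cases ht : t < Δ
    · simp [ht, zero_pow hB.ne']
    · simp only [ht, if_false]
      have hc : 0 ≤ μ * (t - Δ) := mul_nonneg hμ.le (by linarith [not_lt.mp ht])
      have hNB : 0 ≤ (N : ℝ) / (B : ℝ) := by positivity
      have hle1 : Real.exp (-((N : ℝ) / (B : ℝ)) * μ * (t - Δ)) ≤ 1 := by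
        rw [Real.exp_le_one_iff]; nlinarith
      have hpos : 0 ≤ Real.exp (-((N : ℝ) / (B : ℝ)) * μ * (t - Δ)) := (Real.exp_pos _).le
      have : (1 - Real.exp (-((N : ℝ) / (B : ℝ)) * μ * (t - Δ))) ^ B ≤ 1 :=
        pow_le_one₀ (by linarith) (by linarith)
      linarith
  -- integrability of g on Ioi 0
  have hgi : IntegrableOn g (Set.Ioi (0 : ℝ)) := by
    have hD : IntegrableOn (fun t => (B : ℝ) * Real.exp (μ * Δ) * Real.exp (-μ * t))
        (Set.Ioi (0 : ℝ)) := (exp_neg_integrableOn_Ioi 0 hμ).const_mul _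
    refine hD.mono' ?_ ?_
    · refine (AEMeasurable.aestronglyMeasurable ?_)
      refine (Measurable.aemeasurable ?_)
      refine (measurable_const.sub ?_)
      refine Finset.measurable_prod _ (fun i _ => ?_)
      refine Measurable.ite (measurableSet_lt measurable_id measurable_const)
        measurable_const ?_
      exact measurable_const.sub ((measurable_id.sub_const Δ).const_mul _).exp
    · refine (ae_restrict_iff' measurableSet_Ioi).mpr (Filter.Eventually.of_forall ?_)
      intro t ht
      have hB1 : (1 : ℝ) ≤ B := by exact_mod_cast hB
      have hexp : Real.exp (μ * Δ) * Real.exp (-μ * t) = Real.exp (μ * (Δ - t)) := by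
        rw [← Real.exp_add]; ring_nf
      -- bounds on g t
      by_cases htΔ : t < Δ
      · have hgt : g t = 1 := by simp [hg, htΔ, Finset.prod_const, zero_pow hB.ne']
        rw [hgt]
        have h1 : (1 : ℝ) ≤ Real.exp (μ * (Δ - t)) := by
          rw [Real.one_le_exp_iff]; nlinarith
        rw [norm_one, mul_assoc, hexp]
        nlinarith
      · have hc : 0 ≤ μ * (t - Δ) := mul_nonneg hμ.le (by linarith [not_lt.mp htΔ])
        set x := Real.exp (-μ * (t - Δ)) with hx
        have hx0 : 0 < x := Real.exp_pos _
        have hx1 : x ≤ 1 := by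
          rw [hx, Real.exp_le_one_iff]; nlinarith
        have hP : (1 - x) ^ B ≤ ∏ i, (if t < Δ then (0:ℝ)
            else 1 - Real.exp (-(v i : ℝ) * μ * (t - Δ))) := by
          have : ∀ i ∈ Finset.univ, (1 - x) ≤ (if t < Δ then (0:ℝ)
              else 1 - Real.exp (-(v i : ℝ) * μ * (t - Δ))) := by
            intro i _
            simp only [htΔ, if_false]
            have hv1 : (1 : ℝ) ≤ (v i : ℝ) := by exact_mod_cast hv i
            have : Real.exp (-(v i : ℝ) * μ * (t - Δ)) ≤ x := by
              rw [hx]; apply Real.exp_le_exp.mpr; nlinarith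
            linarith
          calc (1 - x) ^ B = ∏ _i : Fin B, (1 - x) := by
                simp [Finset.prod_const, Finset.card_univ]
            _ ≤ _ := Finset.prod_le_prod (fun i _ => by linarith) this
        have hPle1 : ∏ i, (if t < Δ then (0:ℝ)
            else 1 - Real.exp (-(v i : ℝ) * μ * (t - Δ))) ≤ 1 := by
          refine Finset.prod_le_one (fun i _ => ?_) (fun i _ => ?_)
          · simp only [htΔ, if_false]
            have hv1 : (1 : ℝ) ≤ (v i : ℝ) := by exact_mod_cast hv i
            have : Real.exp (-(v i : ℝ) * μ * (t - Δ)) ≤ 1 := by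
              rw [Real.exp_le_one_iff]; nlinarith
            linarith
          · simp only [htΔ, if_false]
            have : 0 < Real.exp (-(v i : ℝ) * μ * (t - Δ)) := Real.exp_pos _
            linarith
        have hbern : 1 - (1 - x) ^ B ≤ B * x := by
          have := one_add_mul_le_pow (a := -x) (by linarith) B
          have h' : 1 + (B : ℝ) * (-x) ≤ (1 - x) ^ B := by
            simpa [sub_eq_add_neg] using this
          linarith
        have hgt : g t ≤ (B : ℝ) * x := by
          simp only [hg]; linarith
        have hgt0 : 0 ≤ g t := by simp only [hg]; linarith
        rw [Real.norm_of_nonneg hgt0]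
        have hxval : x = Real.exp (μ * Δ) * Real.exp (-μ * t) := by
          rw [hexp, hx]; ring_nf
        rw [mul_assoc, ← hxval]
        exact hgt
  calc ∫ t in Set.Ioi (0:ℝ), f t
      ≤ ∫ t in Set.Ioi (0:ℝ), g t :=
        integral_mono_of_nonneg (Filter.Eventually.of_forall hf0) hgi
          (Filter.Eventually.of_forall hfg)
    _ = _ := rfl
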